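/- Let F be a real polynomial of degree less than N with coefficients F_0, …, F_{N−1}, and for r ≥ 0 let β*_r F denote the remainder on dividing ∑_{k=0}^{N−1} β_{r,k}·F_k·X^{k+r} by A(X) = X^N + 2^{−b} X − 1. Then for every integer λ ≥ 0 and every index 0 ≤ i < N: the series ∑_{r=0}^∞ (coefficient of X^i in β*_r F) converges absolutely; the tail satisfies |∑_{r=λ}^∞ (coefficient of X^i in β*_r F)| ≤ (4/3)·2^{−λ(b−2)}·max_{0≤k<N}|F_k|; and |∑_{r=0}^{λ−1} (coefficient of X^i in β*_r F)| ≤ (4/3)·max_{0≤k<N}|F_k|. -/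

import Mathlib

open Polynomial

/-- Generalized binomial coefficient `C(x, r) = x (x-1) ⋯ (x-r+1) / r!`. -/
noncomputable def gbc (x : ℝ) (r : ℕ) : ℝ :=
  (∏ j ∈ Finset.range r, (x - j)) / (r.factorial : ℝ)

/-- `β_{r,k} = C(-k/N, r) (-2^(-b))^r`. -/
noncomputable def betaC (b N r k : ℕ) : ℝ :=
  gbc (-(k : ℝ) / N) r * (-(2:ℝ) ^ (-(b:ℤ))) ^ r

/-- The polynomial `A(X) = X^N + 2^(-b) X - 1` over `ℝ`. -/
noncomputable def Apoly (b N : ℕ) : Polynomial ℝ :=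
  X ^ N + C ((2:ℝ) ^ (-(b:ℤ))) * X - 1

/-- `β*_r F`: the remainder of `∑_{k<N} β_{r,k} F_k X^(k+r)` modulo `A(X)`. -/
noncomputable def bstar (b N r : ℕ) (F : Polynomial ℝ) : Polynomial ℝ :=
  (∑ k ∈ Finset.range N, C (betaC b N r k * F.coeff k) * X ^ (k + r)) %ₘ Apoly b N

lemma Apoly_eq (b N : ℕ) : Apoly b N = X ^ N + (C ((2:ℝ) ^ (-(b:ℤ))) * X - 1) := by
  rw [Apoly]; ring

lemma Apoly_monic (b N : ℕ) (hN : 2 ≤ N) : (Apoly b N).Monic := by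
  rw [Apoly_eq]
  apply monic_X_pow_add
  calc degree (C ((2:ℝ) ^ (-(b:ℤ))) * X - 1) ≤ max (degree (C ((2:ℝ) ^ (-(b:ℤ))) * X)) (degree (1 : Polynomial ℝ)) := degree_sub_le _ _
    _ ≤ 1 := by
        apply max_le
        · exact degree_C_mul_X_le _
        · exact degree_one_le.trans (by norm_num)
    _ < (N : WithBot ℕ) := by exact_mod_cast Nat.lt_of_lt_of_le (by norm_num) hN

lemma Apoly_degree (b N : ℕ) (hN : 2 ≤ N) : (Apoly b N).degree = N := by
  rw [Apoly_eq]
  rw [degree_add_eq_left_of_degree_lt, degree_X_pow]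
  rw [degree_X_pow]
  calc degree (C ((2:ℝ) ^ (-(b:ℤ))) * X - 1) ≤ max (degree (C ((2:ℝ) ^ (-(b:ℤ))) * X)) (degree (1 : Polynomial ℝ)) := degree_sub_le _ _
    _ ≤ 1 := by
        apply max_le
        · exact degree_C_mul_X_le _
        · exact degree_one_le.trans (by norm_num)
    _ < (N : WithBot ℕ) := by exact_mod_cast Nat.lt_of_lt_of_le (by norm_num) hN

lemma Apoly_coeff (b N m : ℕ) :
    (Apoly b N).coeff m =
      (if m = N then 1 else 0) + (if 1 = m then ((2:ℝ) ^ (-(b:ℤ))) else 0)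
        - (if m = 0 then 1 else 0) := by
  simp [Apoly, coeff_X_pow, coeff_one, coeff_X]

lemma step (b N : ℕ) (hN : 2 ≤ N) (P : Polynomial ℝ) (B : ℝ)
    (hP : ∀ i, |(P %ₘ Apoly b N).coeff i| ≤ B) :
    ∀ i, |((X * P) %ₘ Apoly b N).coeff i| ≤ (1 + (2:ℝ) ^ (-(b:ℤ))) * B := by
  set ε : ℝ := (2:ℝ) ^ (-(b:ℤ)) with hε
  have hε0 : 0 < ε := by positivity
  set A := Apoly b N with hA
  set R := P %ₘ A with hR
  set c := R.coeff (N - 1) with hc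
  have hmonic := Apoly_monic b N hN
  have hB0 : 0 ≤ B := le_trans (abs_nonneg _) (hP 0)
  have hcB : |c| ≤ B := hP (N - 1)
  have hRdeg : R.degree < (N : WithBot ℕ) := by
    rw [← Apoly_degree b N hN]; exact degree_modByMonic_lt P hmonic
  have hRcoeff : ∀ m, N ≤ m → R.coeff m = 0 := by
    intro m hm
    exact (degree_lt_iff_coeff_zero R N).mp hRdeg m (by exact_mod_cast hm)
  have hdegS : (X * R - C c * A).degree < A.degree := by
    rw [Apoly_degree b N hN, degree_lt_iff_coeff_zero]
    intro m hm
    have hm' : (N : ℕ) ≤ m := by exact_mod_cast hm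
    obtain ⟨m, rfl⟩ : ∃ m', m = m' + 1 := ⟨m - 1, by omega⟩
    rw [coeff_sub, coeff_X_mul, coeff_C_mul, Apoly_coeff]
    have h2 : ¬ (1 = m + 1) := by omega
    have h3 : ¬ (m + 1 = 0) := by omega
    by_cases h : m + 1 = N
    · have hm1 : m = N - 1 := by omega
      rw [if_pos h, if_neg h2, if_neg h3, hm1, ← hc]
      ring
    · rw [if_neg h, if_neg h2, if_neg h3, hRcoeff m (by omega)]
      ring
  have hkey : (X * P) %ₘ A = X * R - C c * A := by
    have hdiv := modByMonic_add_div P (Apoly b N)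
    refine (div_modByMonic_unique (X * (P /ₘ A) + C c) (X * R - C c * A) hmonic
      ⟨?_, hdegS⟩).2
    rw [← hA, ← hR] at hdiv
    linear_combination X * hdiv
  intro i
  rw [hkey]
  match i with
  | 0 =>
    have hv : (X * R - C c * A).coeff 0 = c := by
      rw [coeff_sub, mul_coeff_zero, mul_coeff_zero, coeff_X_zero, coeff_C_zero, hA, Apoly_coeff]
      have : ¬ ((0:ℕ) = N) := by omega
      simp [this]
    rw [hv]
    nlinarith
  | (i+1) =>
    rw [coeff_sub, coeff_X_mul, coeff_C_mul, hA, Apoly_coeff]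
    have h3 : ¬ (i + 1 = 0) := by omega
    by_cases h : i + 1 = N
    · have h2 : ¬ (1 = i + 1) := by omega
      have hi1 : i = N - 1 := by omega
      rw [if_pos h, if_neg h2, if_neg h3, hi1, ← hc]
      simp only [sub_zero, mul_one, add_zero]
      rw [sub_self, abs_zero]
      positivity
    · rw [if_neg h, if_neg h3]
      by_cases h2 : 1 = i + 1
      · rw [if_pos h2]
        calc |R.coeff i - c * ((0:ℝ) + ε - 0)| ≤ |R.coeff i| + |c * (0 + ε - 0)| :=
              abs_sub _ _
          _ ≤ B + B * ε := by
              refine add_le_add (hP i) ?_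
              rw [abs_mul]
              have h4 : |(0:ℝ) + ε - 0| = ε := by
                rw [zero_add, sub_zero, abs_of_nonneg hε0.le]
              rw [h4]
              exact mul_le_mul_of_nonneg_right hcB hε0.le
          _ ≤ (1 + ε) * B := by nlinarith
      · rw [if_neg h2]
        simp only [add_zero, sub_zero, zero_add, mul_zero, sub_zero]
        calc |R.coeff i| ≤ B := hP i
          _ ≤ (1 + ε) * B := by nlinarith

lemma iter (b N : ℕ) (hN : 2 ≤ N) (P : Polynomial ℝ) (B : ℝ)
    (hP : ∀ i, |(P %ₘ Apoly b N).coeff i| ≤ B) :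
    ∀ r i, |((X ^ r * P) %ₘ Apoly b N).coeff i| ≤ (1 + (2:ℝ) ^ (-(b:ℤ))) ^ r * B := by
  intro r
  induction r with
  | zero => simpa using hP
  | succ r ih =>
    intro i
    have h := step b N hN (X ^ r * P) ((1 + (2:ℝ) ^ (-(b:ℤ))) ^ r * B) ih i
    have he : X ^ (r + 1) * P = X * (X ^ r * P) := by ring
    rw [he]
    calc |((X * (X ^ r * P)) %ₘ Apoly b N).coeff i|
        ≤ (1 + (2:ℝ) ^ (-(b:ℤ))) * ((1 + (2:ℝ) ^ (-(b:ℤ))) ^ r * B) := h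
      _ = (1 + (2:ℝ) ^ (-(b:ℤ))) ^ (r + 1) * B := by ring

lemma gbc_abs_le (x : ℝ) (hx1 : -1 ≤ x) (hx0 : x ≤ 0) (r : ℕ) : |gbc x r| ≤ 1 := by
  rw [gbc, abs_div, abs_of_nonneg (by positivity : (0:ℝ) ≤ (r.factorial : ℝ))]
  rw [div_le_one (by positivity : (0:ℝ) < (r.factorial : ℝ))]
  rw [Finset.abs_prod]
  calc ∏ j ∈ Finset.range r, |x - (j:ℝ)|
      ≤ ∏ j ∈ Finset.range r, ((j:ℝ) + 1) := by
        apply Finset.prod_le_prod (fun j _ => abs_nonneg _)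
        intro j _
        have hj : (0:ℝ) ≤ (j:ℝ) := Nat.cast_nonneg j
        rw [abs_of_nonpos (by linarith)]
        linarith
    _ = (r.factorial : ℝ) := by
        have := Finset.prod_range_add_one_eq_factorial r
        push_cast [← this]
        rfl

lemma betaC_abs_le (b N r k : ℕ) (hk : k < N) :
    |betaC b N r k| ≤ ((2:ℝ) ^ (-(b:ℤ))) ^ r := by
  have hN' : 0 < N := lt_of_le_of_lt (Nat.zero_le k) hk
  have hN0 : (0:ℝ) < N := by exact_mod_cast hN'
  rw [betaC, abs_mul, abs_pow, abs_neg, abs_of_nonneg (by positivity : (0:ℝ) ≤ (2:ℝ) ^ (-(b:ℤ)))]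
  have h1 : |gbc (-(k : ℝ) / N) r| ≤ 1 := by
    apply gbc_abs_le
    · rw [neg_div]
      have h2 : (k:ℝ)/N ≤ 1 := (div_le_one hN0).mpr (by exact_mod_cast hk.le)
      linarith
    · rw [neg_div]
      have h2 : (0:ℝ) ≤ (k:ℝ)/N := div_nonneg (Nat.cast_nonneg k) hN0.le
      linarith
  nlinarith [pow_nonneg (by positivity : (0:ℝ) ≤ (2:ℝ) ^ (-(b:ℤ))) r,
    abs_nonneg (gbc (-(k : ℝ) / N) r)]


/-- the coefficientwise series `∑_r (β*_r F)_i` converges absolutely,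
the tail from `r = λ` onwards is bounded by `(4/3) 2^(-λ(b-2)) max_k |F_k|`, and the
partial sum over `r < λ` is bounded by `(4/3) max_k |F_k|`. -/
theorem bstar_series_bounds (b N : ℕ) (hb : 4 ≤ b) (hN : 3 ≤ N)
    (F : Polynomial ℝ) (hF : F.natDegree < N) (lam : ℕ) (i : ℕ) (hi : i < N) :
    Summable (fun r : ℕ => |(bstar b N r F).coeff i|) ∧
    |∑' r : ℕ, (bstar b N (lam + r) F).coeff i| ≤
      4 / 3 * (2:ℝ) ^ (-((lam : ℤ) * ((b : ℤ) - 2))) *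
        (Finset.range N).sup' (Finset.nonempty_range_iff.mpr (by omega))
          (fun k => |F.coeff k|) ∧
    |∑ r ∈ Finset.range lam, (bstar b N r F).coeff i| ≤
      4 / 3 *
        (Finset.range N).sup' (Finset.nonempty_range_iff.mpr (by omega))
          (fun k => |F.coeff k|) := by
  have hN2 : 2 ≤ N := by omega
  have hNne : (Finset.range N).Nonempty := Finset.nonempty_range_iff.mpr (by omega)
  set ε : ℝ := (2:ℝ) ^ (-(b:ℤ)) with hε
  have hε0 : 0 < ε := by positivity
  have hε16 : ε ≤ 1 / 16 := by
    rw [hε]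
    calc (2:ℝ) ^ (-(b:ℤ)) ≤ (2:ℝ) ^ (-(4:ℤ)) := by
          apply zpow_le_zpow_right₀ (by norm_num : (1:ℝ) ≤ 2)
          omega
      _ = 1 / 16 := by norm_num
  set q : ℝ := ε * (1 + ε) with hq
  have hq0 : 0 ≤ q := by positivity
  have hq4 : q ≤ 1 / 4 := by nlinarith
  have hq1 : q < 1 := by linarith
  set M : ℝ := (Finset.range N).sup' hNne (fun k => |F.coeff k|) with hM
  have hMk : ∀ k, k < N → |F.coeff k| ≤ M := fun k hk =>
    Finset.le_sup' (fun k => |F.coeff k|) (Finset.mem_range.mpr hk)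
  have hM0 : 0 ≤ M := le_trans (abs_nonneg _) (hMk 0 (by omega))
  have hinv0 : (0:ℝ) < 1 - q := by linarith
  have hinv : (1 - q)⁻¹ ≤ 4 / 3 := by
    rw [inv_le_comm₀ hinv0 (by norm_num)]
    linarith
  have hinvpos : (0:ℝ) ≤ (1 - q)⁻¹ := by positivity
  -- uniform coefficient bound
  have hcoeff : ∀ r j, |(bstar b N r F).coeff j| ≤ q ^ r * M := by
    intro r j
    set G : Polynomial ℝ := ∑ k ∈ Finset.range N, C (betaC b N r k * F.coeff k) * X ^ k with hG
    have hGcoeff : ∀ m, G.coeff m = if m < N then betaC b N r m * F.coeff m else 0 := by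
      intro m
      simp only [hG, finset_sum_coeff, coeff_C_mul, coeff_X_pow, mul_ite, mul_one, mul_zero,
        Finset.sum_ite_eq, Finset.mem_range]
    have hGmod : G %ₘ Apoly b N = G := by
      rw [modByMonic_eq_self_iff (Apoly_monic b N hN2), Apoly_degree b N hN2,
        degree_lt_iff_coeff_zero]
      intro m hm
      rw [hGcoeff, if_neg]
      exact not_lt.mpr (by exact_mod_cast hm)
    have hGB : ∀ m, |(G %ₘ Apoly b N).coeff m| ≤ ε ^ r * M := by
      intro m
      rw [hGmod, hGcoeff]
      split_ifs with h
      · rw [abs_mul]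
        exact mul_le_mul (betaC_abs_le b N r m h) (hMk m h) (abs_nonneg _)
          (pow_nonneg hε0.le r)
      · rw [abs_zero]; positivity
    have hbstar : bstar b N r F = (X ^ r * G) %ₘ Apoly b N := by
      rw [bstar, hG, Finset.mul_sum]
      congr 1
      apply Finset.sum_congr rfl
      intro k _
      rw [pow_add]; ring
    rw [hbstar]
    calc |((X ^ r * G) %ₘ Apoly b N).coeff j| ≤ (1 + ε) ^ r * (ε ^ r * M) :=
        iter b N hN2 G (ε ^ r * M) hGB r j
      _ = q ^ r * M := by rw [hq, mul_pow]; ring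
  have hsum_geo : Summable (fun r : ℕ => q ^ r * M) :=
    (summable_geometric_of_lt_one hq0 hq1).mul_right M
  have hsum1 : Summable (fun r : ℕ => |(bstar b N r F).coeff i|) :=
    Summable.of_nonneg_of_le (fun r => abs_nonneg _) (fun r => hcoeff r i) hsum_geo
  refine ⟨hsum1, ?_, ?_⟩
  · -- tail bound
    have hle : ∀ r : ℕ, |(bstar b N (lam + r) F).coeff i| ≤ q ^ lam * M * q ^ r := by
      intro r
      calc |(bstar b N (lam + r) F).coeff i| ≤ q ^ (lam + r) * M := hcoeff (lam + r) i
        _ = q ^ lam * M * q ^ r := by rw [pow_add]; ring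
    have hs : Summable (fun r : ℕ => q ^ lam * M * q ^ r) :=
      (summable_geometric_of_lt_one hq0 hq1).mul_left _
    have hsum2 : Summable (fun r : ℕ => |(bstar b N (lam + r) F).coeff i|) :=
      Summable.of_nonneg_of_le (fun _ => abs_nonneg _) hle hs
    have h1 : |∑' r : ℕ, (bstar b N (lam + r) F).coeff i| ≤
        ∑' r : ℕ, |(bstar b N (lam + r) F).coeff i| := by
      simpa [Real.norm_eq_abs] using
        norm_tsum_le_tsum_norm (f := fun r : ℕ => (bstar b N (lam + r) F).coeff i)
          (by simpa [Real.norm_eq_abs] using hsum2)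
    have h2 : ∑' r : ℕ, |(bstar b N (lam + r) F).coeff i| ≤
        ∑' r : ℕ, q ^ lam * M * q ^ r := Summable.tsum_le_tsum hle hsum2 hs
    have h3 : ∑' r : ℕ, q ^ lam * M * q ^ r = q ^ lam * M * (1 - q)⁻¹ := by
      rw [tsum_mul_left, tsum_geometric_of_lt_one hq0 hq1]
    have hzpow : (2:ℝ) ^ (-((lam : ℤ) * ((b : ℤ) - 2))) = (4 * ε) ^ lam := by
      have he : (-((lam : ℤ) * ((b : ℤ) - 2))) = (-(b:ℤ) + 2) * (lam : ℤ) := by ring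
      rw [he, zpow_mul, zpow_natCast]
      congr 1
      rw [zpow_add₀ (two_ne_zero), hε]
      norm_num
      ring
    have hql : q ^ lam ≤ (4 * ε) ^ lam := by
      apply pow_le_pow_left₀ hq0
      nlinarith
    have hfin : q ^ lam * M * (1 - q)⁻¹ ≤ 4 / 3 * (4 * ε) ^ lam * M := by
      have h5 : q ^ lam * (1 - q)⁻¹ ≤ (4 * ε) ^ lam * (4 / 3) :=
        mul_le_mul hql hinv hinvpos (by positivity)
      calc q ^ lam * M * (1 - q)⁻¹ = q ^ lam * (1 - q)⁻¹ * M := by ring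
        _ ≤ (4 * ε) ^ lam * (4 / 3) * M := mul_le_mul_of_nonneg_right h5 hM0
        _ = 4 / 3 * (4 * ε) ^ lam * M := by ring
    rw [hzpow]
    linarith
  · -- partial sum bound
    have h1 : |∑ r ∈ Finset.range lam, (bstar b N r F).coeff i| ≤
        ∑ r ∈ Finset.range lam, |(bstar b N r F).coeff i| :=
      Finset.abs_sum_le_sum_abs _ _
    have h2 : ∑ r ∈ Finset.range lam, |(bstar b N r F).coeff i| ≤
        ∑ r ∈ Finset.range lam, q ^ r * M :=
      Finset.sum_le_sum fun r _ => hcoeff r i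
    have h3 : ∑ r ∈ Finset.range lam, q ^ r * M ≤ ∑' r : ℕ, q ^ r * M :=
      Summable.sum_le_tsum _ (fun r _ => by positivity) hsum_geo
    have h4 : ∑' r : ℕ, q ^ r * M = (1 - q)⁻¹ * M := by
      rw [tsum_mul_right, tsum_geometric_of_lt_one hq0 hq1]
    have h5 : (1 - q)⁻¹ * M ≤ 4 / 3 * M := mul_le_mul_of_nonneg_right hinv hM0
    linarith
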